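/- Let G be a finite group, g ≥ 0 and n ≥ 0 integers, c_1, …, c_n ∈ G, and χ the character of an irreducible complex representation of G of dimension d. Then Σ over all tuples (x_1, y_1, …, x_g, y_g, z_1, …, z_n) with x_j, y_j ∈ G and z_j in the conjugacy class O_{c_j} of χ([x_1,y_1]···[x_g,y_g] z_1 ··· z_n) equals |G|^{2g} · (∏_{j=1}^n |O_{c_j}|) · (∏_{j=1}^n χ(c_j)) / d^{2g+n-1}. -/

import Mathlib

open CategoryTheory
open scoped Classical
open scoped commutatorElement

open FDRep

section Aux

variable {G : Type} [Group G] [Fintype G]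

lemma my_char_one_ne (V : FDRep ℂ G) (hV : Simple V) : V.character 1 ≠ 0 := by
  haveI := hV
  rw [char_one]
  intro h
  norm_cast at h
  haveI : Subsingleton V := Module.finrank_zero_iff.mp h
  haveI : Subsingleton ((forget (FGModuleCat ℂ)).obj V.V) := ‹Subsingleton V›
  apply id_nonzero V
  ext v
  exact Subsingleton.elim _ _

lemma schur_scalar (V : FDRep ℂ G) (hV : Simple V) (T : V →ₗ[ℂ] V)
    (hc : ∀ g : G, V.ρ g ∘ₗ T = T ∘ₗ V.ρ g) :
    T = (LinearMap.trace ℂ V T / V.character 1) • LinearMap.id := by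
  haveI := hV
  let f : V ⟶ V := ⟨⟨ConcreteCategory.ofHom T⟩, fun g => by ext v; exact congrFun (congrArg _ (hc g).symm) v⟩
  obtain ⟨a, ha⟩ := endomorphism_simple_eq_smul_id ℂ f
  have hT : T = a • LinearMap.id := by
    have := congrArg (fun φ => φ.hom.hom.hom) ha
    exact this.symm
  have htr : LinearMap.trace ℂ V T = a * V.character 1 := by
    rw [hT, map_smul, LinearMap.trace_id, char_one]
    simp [mul_comm]
  rw [htr, hT]
  congr 1
  have hd := my_char_one_ne V hV
  rw [char_one] at hd
  rw [mul_div_assoc, div_self (my_char_one_ne V hV), mul_one]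

lemma my_char_mul (V : FDRep ℂ G) (u b : G) :
    V.character (u * b) = LinearMap.trace ℂ V (V.ρ u ∘ₗ V.ρ b) := by
  rw [character, map_mul]; rfl

lemma sum_smul_char (V : FDRep ℂ G) (hV : Simple V) {ι : Type*} [Fintype ι]
    (u : ι → G) (hc : ∀ g : G, V.ρ g ∘ₗ (∑ i, V.ρ (u i)) = (∑ i, V.ρ (u i)) ∘ₗ V.ρ g)
    (b : G) :
    ∑ i, V.character (u i * b) = (∑ i, V.character (u i)) * V.character b / V.character 1 := by
  have hT := schur_scalar V hV (∑ i, V.ρ (u i)) hc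
  have htr : LinearMap.trace ℂ V (∑ i, V.ρ (u i)) = ∑ i, V.character (u i) := by
    rw [map_sum]; rfl
  calc ∑ i, V.character (u i * b)
      = LinearMap.trace ℂ V ((∑ i, V.ρ (u i)) ∘ₗ V.ρ b) := by
        rw [← Module.End.mul_eq_comp, Finset.sum_mul, map_sum]
        exact Finset.sum_congr rfl fun i _ => my_char_mul V (u i) b
    _ = (∑ i, V.character (u i)) * V.character b / V.character 1 := by
        rw [hT, LinearMap.smul_comp, map_smul, htr, smul_eq_mul]
        have : LinearMap.trace ℂ V (LinearMap.id ∘ₗ V.ρ b) = V.character b := by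
          rw [LinearMap.id_comp]; rfl
        rw [this]; ring

lemma conj_sum (V : FDRep ℂ G) (hV : Simple V) (a b : G) :
    ∑ x : G, V.character (x * a * x⁻¹ * b)
      = Fintype.card G * V.character a * V.character b / V.character 1 := by
  have h := sum_smul_char V hV (fun x : G => x * a * x⁻¹) ?_ b
  · rw [h]
    congr 2
    rw [Finset.sum_congr rfl fun x _ => char_conj V a x, Finset.sum_const]
    simp [mul_comm]
  · intro g
    have h1 : ∀ x : G, V.ρ g * V.ρ (x * a * x⁻¹) = V.ρ (g * x * a * (g * x)⁻¹) * V.ρ g := by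
      intro x
      rw [← map_mul, ← map_mul]
      congr 1
      group
    rw [← Module.End.mul_eq_comp, ← Module.End.mul_eq_comp, Finset.mul_sum, Finset.sum_mul]
    rw [Finset.sum_congr rfl fun x _ => h1 x]
    exact Fintype.sum_equiv (Equiv.mulLeft g)
      (fun x => V.ρ (g * x * a * (g * x)⁻¹) * V.ρ g)
      (fun x => V.ρ (x * a * x⁻¹) * V.ρ g) fun x => rfl

open scoped Classical in
lemma class_sum (V : FDRep ℂ G) (hV : Simple V) (a t : G) :
    ∑ z : conjugatesOf a, V.character ((z : G) * t)
      = (Nat.card (conjugatesOf a) : ℂ) * V.character a * V.character t / V.character 1 := by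
  have h := sum_smul_char V hV (fun z : conjugatesOf a => (z : G)) ?_ t
  · rw [h]
    congr 2
    have h2 : ∀ z : conjugatesOf a, V.character (z : G) = V.character a := by
      rintro ⟨z, hz⟩
      obtain ⟨c, hc⟩ := isConj_iff.mp hz
      show V.character z = V.character a
      rw [← hc]
      exact char_conj V a c
    rw [Finset.sum_congr rfl fun z _ => h2 z, Finset.sum_const, Nat.card_eq_fintype_card]
    simp [mul_comm]
  · intro g
    have mem : ∀ z : G, z ∈ conjugatesOf a → g * z * g⁻¹ ∈ conjugatesOf a := by
      intro z hz
      exact hz.trans (isConj_iff.mpr ⟨g, rfl⟩)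
    have h1 : ∀ z : conjugatesOf a, V.ρ g * V.ρ (z : G) = V.ρ (g * z * g⁻¹) * V.ρ g := by
      intro z
      rw [← map_mul, ← map_mul]
      congr 1
      group
    rw [← Module.End.mul_eq_comp, ← Module.End.mul_eq_comp, Finset.mul_sum, Finset.sum_mul]
    rw [Finset.sum_congr rfl fun z _ => h1 z]
    have memInv : ∀ z : G, z ∈ conjugatesOf a → g⁻¹ * z * g ∈ conjugatesOf a := by
      intro z hz
      refine hz.trans (isConj_iff.mpr ⟨g⁻¹, ?_⟩)
      group
    let e : conjugatesOf a ≃ conjugatesOf a :=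
      { toFun := fun z => ⟨g * (z : G) * g⁻¹, mem _ z.2⟩
        invFun := fun z => ⟨g⁻¹ * (z : G) * g, memInv _ z.2⟩
        left_inv := fun z => Subtype.ext (by show g⁻¹ * (g * (z : G) * g⁻¹) * g = z; group)
        right_inv := fun z => Subtype.ext (by show g * (g⁻¹ * (z : G) * g) * g⁻¹ = z; group) }
    exact Fintype.sum_equiv e
      (fun z => V.ρ (g * (z : G) * g⁻¹) * V.ρ g)
      (fun z => V.ρ (z : G) * V.ρ g) fun z => rfl

lemma conv_sum (V : FDRep ℂ G) (hV : Simple V) (t : G) :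
    ∑ y : G, V.character y * V.character (y⁻¹ * t)
      = Fintype.card G * V.character t / V.character 1 := by
  set T : Module.End ℂ V := ∑ y : G, V.character y • V.ρ y⁻¹ with hTdef
  have hcomm : ∀ g : G, V.ρ g ∘ₗ T = T ∘ₗ V.ρ g := by
    intro g
    rw [← Module.End.mul_eq_comp, ← Module.End.mul_eq_comp, hTdef, Finset.mul_sum,
      Finset.sum_mul]
    have h1 : ∀ y : G, V.ρ g * V.character y • V.ρ y⁻¹
        = V.character y • V.ρ (g * y⁻¹) := by
      intro y; rw [mul_smul_comm, ← map_mul]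
    have h2 : ∀ y : G, V.character y • V.ρ y⁻¹ * V.ρ g
        = V.character y • V.ρ (y⁻¹ * g) := by
      intro y; rw [smul_mul_assoc, ← map_mul]
    rw [Finset.sum_congr rfl fun y _ => h1 y, Finset.sum_congr rfl fun y _ => h2 y]
    refine Fintype.sum_equiv
      ⟨fun y => g * y * g⁻¹, fun y => g⁻¹ * y * g, fun y => by group, fun y => by group⟩
      (fun y => V.character y • V.ρ (g * y⁻¹))
      (fun y => V.character y • V.ρ (y⁻¹ * g)) fun y => ?_
    show V.character y • V.ρ (g * y⁻¹)
      = V.character (g * y * g⁻¹) • V.ρ ((g * y * g⁻¹)⁻¹ * g)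
    rw [char_conj]
    congr 2
    group
  have hT := schur_scalar V hV T hcomm
  haveI : Invertible (Fintype.card G : ℂ) :=
    invertibleOfNonzero (by exact_mod_cast Fintype.card_ne_zero)
  have horth : ∑ y : G, V.character y * V.character y⁻¹ = (Fintype.card G : ℂ) := by
    haveI := hV
    have h := char_orthonormal (k := ℂ) (G := G) V V
    rw [if_pos ⟨Iso.refl V⟩] at h
    have h' : ⅟(Fintype.card G : ℂ) • ∑ y : G, V.character y * V.character y⁻¹ = 1 := by
      simpa [invOf_eq_inv, Nat.card_eq_fintype_card] using h
    calc ∑ y : G, V.character y * V.character y⁻¹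
        = (Fintype.card G : ℂ) * (⅟(Fintype.card G : ℂ) •
            ∑ y : G, V.character y * V.character y⁻¹) := by
          rw [smul_eq_mul, mul_invOf_cancel_left']
      _ = (Fintype.card G : ℂ) := by rw [h', mul_one]
  have htr : LinearMap.trace ℂ V T = (Fintype.card G : ℂ) := by
    rw [hTdef, map_sum, ← horth]
    refine Finset.sum_congr rfl fun y _ => ?_
    rw [map_smul, smul_eq_mul]
    rfl
  calc ∑ y : G, V.character y * V.character (y⁻¹ * t)
      = LinearMap.trace ℂ V (T ∘ₗ V.ρ t) := by
        rw [← Module.End.mul_eq_comp, hTdef, Finset.sum_mul, map_sum]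
        refine Finset.sum_congr rfl fun y _ => ?_
        rw [smul_mul_assoc, map_smul, smul_eq_mul, ← map_mul]
        rfl
    _ = Fintype.card G * V.character t / V.character 1 := by
        rw [hT, LinearMap.smul_comp, map_smul, htr, smul_eq_mul]
        have : LinearMap.trace ℂ V (LinearMap.id ∘ₗ V.ρ t) = V.character t := by
          rw [LinearMap.id_comp]; rfl
        rw [this]; ring

lemma comm_sum (V : FDRep ℂ G) (hV : Simple V) (t : G) :
    ∑ x : G, ∑ y : G, V.character (⁅x, y⁆ * t)
      = (Fintype.card G : ℂ) ^ 2 * V.character t / V.character 1 ^ 2 := by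
  have h1 : ∀ y : G, ∑ x : G, V.character (⁅x, y⁆ * t)
      = Fintype.card G * V.character y * V.character (y⁻¹ * t) / V.character 1 := by
    intro y
    have := conj_sum V hV y (y⁻¹ * t)
    rw [← this]
    refine Finset.sum_congr rfl fun x _ => ?_
    congr 1
    show x * y * x⁻¹ * y⁻¹ * t = x * y * x⁻¹ * (y⁻¹ * t)
    group
  rw [Finset.sum_comm, Finset.sum_congr rfl fun y _ => h1 y]
  have : ∑ y : G, Fintype.card G * V.character y * V.character (y⁻¹ * t) / V.character 1
      = (Fintype.card G : ℂ) / V.character 1 *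
          ∑ y : G, V.character y * V.character (y⁻¹ * t) := by
    rw [Finset.mul_sum]
    refine Finset.sum_congr rfl fun y _ => ?_
    ring
  rw [this, conv_sum V hV t]
  ring

open scoped Classical in
lemma zprod_sum (V : FDRep ℂ G) (hV : Simple V) :
    ∀ (n : ℕ) (c : Fin n → G) (t : G),
    ∑ z : (∀ j, conjugatesOf (c j)), V.character (t * (List.ofFn fun j => (z j : G)).prod)
      = (∏ j, (Nat.card (conjugatesOf (c j)) : ℂ) * V.character (c j) / V.character 1) *
          V.character t := by
  intro n
  induction n with
  | zero =>
    intro c t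
    rw [Fintype.sum_unique]
    simp
  | succ n ih =>
    intro c t
    rw [← Equiv.sum_comp (Fin.consEquiv fun j => (conjugatesOf (c j)))
      (fun z => V.character (t * (List.ofFn fun j => ((z j : G))).prod)), Fintype.sum_prod_type]
    have step : ∀ (z0 : conjugatesOf (c 0)) (z' : ∀ j : Fin n, conjugatesOf (c j.succ)),
        V.character (t * (List.ofFn fun j =>
            (((Fin.consEquiv fun j => (conjugatesOf (c j))) (z0, z')) j : G)).prod)
          = V.character ((z0 : G) * ((List.ofFn fun j => (z' j : G)).prod * t)) := by
      intro z0 z'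
      have hl : (List.ofFn fun j : Fin (n+1) =>
            (((Fin.consEquiv fun j => (conjugatesOf (c j))) (z0, z')) j : G))
          = (z0 : G) :: List.ofFn fun j : Fin n => (z' j : G) := by
        rw [List.ofFn_succ]
        simp [Fin.consEquiv]
      rw [hl, List.prod_cons, char_mul_comm, mul_assoc]
    rw [Finset.sum_congr rfl fun z0 _ => Finset.sum_congr rfl fun z' _ => step z0 z']
    rw [Finset.sum_comm]
    have inner : ∀ z' : (∀ j : Fin n, conjugatesOf (c j.succ)),
        ∑ z0 : conjugatesOf (c 0),
            V.character ((z0 : G) * ((List.ofFn fun j => (z' j : G)).prod * t))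
          = (Nat.card (conjugatesOf (c 0)) : ℂ) * V.character (c 0) / V.character 1 *
            V.character (t * (List.ofFn fun j => (z' j : G)).prod) := by
      intro z'
      rw [class_sum V hV (c 0), char_mul_comm]
      ring
    rw [Finset.sum_congr rfl fun z' _ => inner z', ← Finset.mul_sum,
      ih (fun j => c j.succ) t, Fin.prod_univ_succ]
    ring

lemma commprod_sum (V : FDRep ℂ G) (hV : Simple V) :
    ∀ (g : ℕ) (t : G),
    ∑ x : Fin g → G, ∑ y : Fin g → G,
        V.character ((List.ofFn fun j => ⁅x j, y j⁆).prod * t)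
      = ((Fintype.card G : ℂ) ^ 2 / V.character 1 ^ 2) ^ g * V.character t := by
  intro g
  induction g with
  | zero =>
    intro t
    rw [Fintype.sum_unique, Fintype.sum_unique]
    simp
  | succ m ih =>
    intro t
    let e := Fin.consEquiv (fun _ : Fin (m + 1) => G)
    rw [← Equiv.sum_comp e (fun x => ∑ y : Fin (m+1) → G,
      V.character ((List.ofFn fun j => ⁅x j, y j⁆).prod * t)), Fintype.sum_prod_type]
    have hy : ∀ (x0 : G) (x' : Fin m → G),
        ∑ y : Fin (m+1) → G,
            V.character ((List.ofFn fun j => ⁅e (x0, x') j, y j⁆).prod * t)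
          = ∑ y0 : G, ∑ y' : Fin m → G,
            V.character (⁅x0, y0⁆ *
              ((List.ofFn fun j => ⁅x' j, y' j⁆).prod * t)) := by
      intro x0 x'
      rw [← Equiv.sum_comp e (fun y =>
        V.character ((List.ofFn fun j => ⁅e (x0, x') j, y j⁆).prod * t)), Fintype.sum_prod_type]
      refine Finset.sum_congr rfl fun y0 _ => Finset.sum_congr rfl fun y' _ => ?_
      have hl : (List.ofFn fun j : Fin (m+1) => ⁅e (x0, x') j, e (y0, y') j⁆)
          = ⁅x0, y0⁆ :: List.ofFn fun j : Fin m => ⁅x' j, y' j⁆ := by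
        rw [List.ofFn_succ]
        simp [e, Fin.consEquiv]
      rw [hl, List.prod_cons, mul_assoc]
    rw [Finset.sum_congr rfl fun x0 _ => Finset.sum_congr rfl fun x' _ => hy x0 x']
    -- now: ∑ x0, ∑ x', ∑ y0, ∑ y', F x0 y0 x' y'
    have swap1 : ∀ x0 : G,
        ∑ x' : Fin m → G, ∑ y0 : G, ∑ y' : Fin m → G,
            V.character (⁅x0, y0⁆ * ((List.ofFn fun j => ⁅x' j, y' j⁆).prod * t))
          = ∑ y0 : G, ∑ x' : Fin m → G, ∑ y' : Fin m → G,
            V.character (⁅x0, y0⁆ * ((List.ofFn fun j => ⁅x' j, y' j⁆).prod * t)) :=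
      fun x0 => Finset.sum_comm
    rw [Finset.sum_congr rfl fun x0 _ => swap1 x0, Finset.sum_comm]
    -- now: ∑ y0, ∑ x0, ∑ x', ∑ y'
    have swap2 : ∀ y0 : G,
        ∑ x0 : G, ∑ x' : Fin m → G, ∑ y' : Fin m → G,
            V.character (⁅x0, y0⁆ * ((List.ofFn fun j => ⁅x' j, y' j⁆).prod * t))
          = ∑ x' : Fin m → G, ∑ y' : Fin m → G, ∑ x0 : G,
            V.character (⁅x0, y0⁆ * ((List.ofFn fun j => ⁅x' j, y' j⁆).prod * t)) := by
      intro y0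
      rw [Finset.sum_comm]
      exact Finset.sum_congr rfl fun x' _ => Finset.sum_comm
    rw [Finset.sum_congr rfl fun y0 _ => swap2 y0, Finset.sum_comm]
    have swap3 : ∀ x' : Fin m → G,
        ∑ y0 : G, ∑ y' : Fin m → G, ∑ x0 : G,
            V.character (⁅x0, y0⁆ * ((List.ofFn fun j => ⁅x' j, y' j⁆).prod * t))
          = ∑ y' : Fin m → G, ∑ x0 : G, ∑ y0 : G,
            V.character (⁅x0, y0⁆ * ((List.ofFn fun j => ⁅x' j, y' j⁆).prod * t)) := by
      intro x'
      rw [Finset.sum_comm]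
      exact Finset.sum_congr rfl fun y' _ => Finset.sum_comm
    rw [Finset.sum_congr rfl fun x' _ => swap3 x']
    rw [Finset.sum_congr rfl fun x' _ => Finset.sum_congr rfl fun y' _ =>
      comm_sum V hV ((List.ofFn fun j => ⁅x' j, y' j⁆).prod * t)]
    have pull : ∑ x' : Fin m → G, ∑ y' : Fin m → G,
        (Fintype.card G : ℂ) ^ 2 *
          V.character ((List.ofFn fun j => ⁅x' j, y' j⁆).prod * t) / V.character 1 ^ 2
        = ((Fintype.card G : ℂ) ^ 2 / V.character 1 ^ 2) *
          ∑ x' : Fin m → G, ∑ y' : Fin m → G,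
            V.character ((List.ofFn fun j => ⁅x' j, y' j⁆).prod * t) := by
      rw [Finset.mul_sum]
      refine Finset.sum_congr rfl fun x' _ => ?_
      rw [Finset.mul_sum]
      exact Finset.sum_congr rfl fun y' _ => by ring
    rw [pull, ih, pow_succ]
    ring

end Aux

/-- For an irreducible complex character χ of a finite group G with dimension d = χ(e),
g, n ≥ 0 and c₁, …, cₙ ∈ G, the sum over all tuples (x₁, y₁, …, x_g, y_g, z₁, …, zₙ) with
xⱼ, yⱼ ∈ G and zⱼ in the conjugacy class O_{cⱼ} of χ([x₁,y₁]⋯[x_g,y_g] z₁ ⋯ zₙ) equals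
|G|^{2g} (∏ⱼ |O_{cⱼ}|) (∏ⱼ χ(cⱼ)) / d^{2g+n-1}. -/
theorem character_surface_relation_sum {G : Type} [Group G] [Fintype G]
    (V : FDRep ℂ G) (hV : Simple V) (g n : ℕ) (c : Fin n → G) :
    (∑ x : Fin g → G, ∑ y : Fin g → G, ∑ z : (∀ j, conjugatesOf (c j)),
        V.character ((List.ofFn fun j => ⁅x j, y j⁆).prod *
          (List.ofFn fun j => (z j : G)).prod)) =
      (Fintype.card G : ℂ) ^ (2 * g) * (∏ j, (Nat.card (conjugatesOf (c j)) : ℂ)) *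
        (∏ j, V.character (c j)) / V.character 1 ^ (2 * (g : ℤ) + n - 1) := by
  have hd : V.character 1 ≠ 0 := my_char_one_ne V hV
  have h1 : ∀ x y : Fin g → G,
      ∑ z : (∀ j, conjugatesOf (c j)),
          V.character ((List.ofFn fun j => ⁅x j, y j⁆).prod *
            (List.ofFn fun j => (z j : G)).prod)
        = (∏ j, (Nat.card (conjugatesOf (c j)) : ℂ) * V.character (c j) / V.character 1) *
            V.character ((List.ofFn fun j => ⁅x j, y j⁆).prod) :=
    fun x y => zprod_sum V hV n c _
  rw [Finset.sum_congr rfl fun x _ => Finset.sum_congr rfl fun y _ => h1 x y]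
  have pull : ∑ x : Fin g → G, ∑ y : Fin g → G,
      (∏ j, (Nat.card (conjugatesOf (c j)) : ℂ) * V.character (c j) / V.character 1) *
        V.character ((List.ofFn fun j => ⁅x j, y j⁆).prod)
      = (∏ j, (Nat.card (conjugatesOf (c j)) : ℂ) * V.character (c j) / V.character 1) *
        ∑ x : Fin g → G, ∑ y : Fin g → G,
          V.character ((List.ofFn fun j => ⁅x j, y j⁆).prod) := by
    rw [Finset.mul_sum]
    exact Finset.sum_congr rfl fun x _ => by rw [Finset.mul_sum]
  rw [pull]
  have h2 : ∑ x : Fin g → G, ∑ y : Fin g → G,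
      V.character ((List.ofFn fun j => ⁅x j, y j⁆).prod)
      = ((Fintype.card G : ℂ) ^ 2 / V.character 1 ^ 2) ^ g * V.character 1 := by
    have := commprod_sum V hV g 1
    simpa [mul_one] using this
  rw [h2]
  have hC : (∏ j, (Nat.card (conjugatesOf (c j)) : ℂ) * V.character (c j) / V.character 1)
      = (∏ j, (Nat.card (conjugatesOf (c j)) : ℂ)) * (∏ j, V.character (c j)) /
          V.character 1 ^ n := by
    rw [Finset.prod_div_distrib, Finset.prod_mul_distrib, Finset.prod_const]
    simp [Finset.card_univ]
  have hz : V.character 1 ^ (2 * (g : ℤ) + n - 1)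
      = V.character 1 ^ (2 * g + n) / V.character 1 := by
    rw [show (2 * (g : ℤ) + n - 1) = ((2 * g + n : ℕ) : ℤ) - 1 by push_cast; ring,
      zpow_sub₀ hd, zpow_natCast, zpow_one]
  rw [hC, hz, div_pow, ← pow_mul, ← pow_mul]
  have hdn : V.character 1 ^ (2 * g + n) ≠ 0 := pow_ne_zero _ hd
  field_simp
  ring
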